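/- arXiv:2303.16862 — 3 statements merged into one kernel-verified Lean document; each statement's English description precedes it below -/
import Mathlib

section
/- Let d > 2. The spherical uniform distribution U_d is not doubling: for every constant C ≥ 1 there exists a convex set S ⊆ 𝔹_d with 0 < ℓ_d(S) < ∞, whose center of mass b(S) := (1/ℓ_d(S)) ∫_S x dℓ_d(x) belongs to supp(U_d), such that U_d(S) > C · U_d(½S), where ½S := b(S) + ½(S − b(S)) denotes the dilation of S by the factor ½ with respect to its center of mass. -/
open MeasureTheory Set Metric Filter
open scoped ENNReal NNReal Topology RealInnerProductSpace

noncomputable section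

abbrev Euc (d : ℕ) := EuclideanSpace ℝ (Fin d)

/-- The normalizing constant `a_d = 2 π^{d/2} / Γ(d/2)`. -/
def aConst (d : ℕ) : ℝ := 2 * Real.pi ^ ((d : ℝ) / 2) / Real.Gamma ((d : ℝ) / 2)

/-- The spherical uniform distribution `U_d` on the open unit ball. -/
def sphericalUniform (d : ℕ) : Measure (Euc d) :=
  volume.withDensity fun x => ENNReal.ofReal
    ((ball (0 : Euc d) 1 \ {0}).indicator (fun x => 1 / (aConst d * ‖x‖ ^ (d - 1))) x)

/-- Subdifferential of a convex function `f : ℝ^d → ℝ`. -/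
def subdiff {d : ℕ} (f : Euc d → ℝ) (x : Euc d) : Set (Euc d) :=
  {y | ∀ z, f x + ⟪y, z - x⟫ ≤ f z}

/-- Subdifferential relative to a set `Ω`. -/
def subdiffOn {d : ℕ} (Ω : Set (Euc d)) (f : Euc d → ℝ) (u : Euc d) : Set (Euc d) :=
  {y | ∀ z ∈ Ω, f u + ⟪y, z - u⟫ ≤ f z}

/-- Support of a measure. -/
def msupport {d : ℕ} (P : Measure (Euc d)) : Set (Euc d) :=
  {x | ∀ U : Set (Euc d), IsOpen U → x ∈ U → 0 < P U}

/-- Assumption A: `P` is a Borel probability measure absolutely continuous with density `p`,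
locally bounded away from `0` and `∞` on `𝒳 ∩ R𝔹_d`. -/
def AssumptionA {d : ℕ} (P : Measure (Euc d)) (p : Euc d → ℝ) : Prop :=
  IsProbabilityMeasure P ∧
  P = volume.withDensity (fun x => ENNReal.ofReal (p x)) ∧
  ∀ R : ℝ, 0 < R → ∃ lam Lam : ℝ, 0 < lam ∧ lam ≤ Lam ∧
    ∀ x ∈ interior (msupport P) ∩ ball (0 : Euc d) R, lam ≤ p x ∧ p x ≤ Lam

/-- A center-outward potential for `P`. -/
def IsCenterOutwardPotential {d : ℕ} (P : Measure (Euc d)) (φ : Euc d → ℝ) : Prop :=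
  ConvexOn ℝ univ φ ∧
  (⋃ x, subdiff φ x) ⊆ closedBall (0 : Euc d) 1 ∧
  ∃ T : Euc d → Euc d, Measurable T ∧
    (∀ᵐ x ∂(volume : Measure (Euc d)), T x ∈ subdiff φ x) ∧
    P.map T = sphericalUniform d

/-- A quantile potential for `P`. -/
def IsQuantilePotential {d : ℕ} (P : Measure (Euc d)) (ψ : Euc d → ℝ) : Prop :=
  ConvexOn ℝ (ball (0 : Euc d) 1) ψ ∧
  ∃ S : Euc d → Euc d, Measurable S ∧
    (∀ᵐ u ∂(volume : Measure (Euc d)), u ∈ ball (0 : Euc d) 1 →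
      S u ∈ subdiffOn (ball (0 : Euc d) 1) ψ u) ∧
    (sphericalUniform d).map S = P

/-- Center of mass of a set. -/
def centerOfMass {d : ℕ} (S : Set (Euc d)) : Euc d :=
  (volume S).toReal⁻¹ • ∫ x in S, x

/-- Dilation of `S` by the factor `1/2` with respect to its center of mass. -/
def halfDilation {d : ℕ} (S : Set (Euc d)) : Set (Euc d) :=
  (fun x => centerOfMass S + (2⁻¹ : ℝ) • (x - centerOfMass S)) '' S


theorem pi_indicator_prod {d : ℕ} (t : Fin d → Set ℝ) (i : Fin d) (y : Fin d → ℝ) :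
    (Set.univ.pi t).indicator (fun y => y i) y
      = ∏ j, (t j).indicator (fun z => if j = i then z else 1) (y j) := by
  by_cases h : y ∈ Set.univ.pi t
  · rw [Set.indicator_of_mem h]
    have : ∀ j, (t j).indicator (fun z => if j = i then z else 1) (y j)
        = if j = i then y j else 1 := fun j =>
      Set.indicator_of_mem (h j (Set.mem_univ j)) _
    simp_rw [this]
    simp
  · rw [Set.indicator_of_notMem h]
    rw [Set.mem_pi] at h
    push_neg at h
    obtain ⟨j₀, -, hj₀⟩ := h
    exact (Finset.prod_eq_zero (Finset.mem_univ j₀)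
      (Set.indicator_of_notMem hj₀ _)).symm

theorem pi_setIntegral_coord {d : ℕ} (t : Fin d → Set ℝ) (ht : ∀ j, MeasurableSet (t j))
    (i : Fin d) :
    ∫ y in Set.univ.pi t, y i ∂(volume : Measure (Fin d → ℝ))
      = ∏ j, ∫ z, (t j).indicator (fun z => if j = i then z else 1) z := by
  rw [← integral_indicator (MeasurableSet.univ_pi ht)]
  simp_rw [pi_indicator_prod t i]
  exact integral_fintype_prod_eq_prod (ι := Fin d)
    fun j z => (t j).indicator (fun z => if j = i then z else 1) z

theorem euc_setIntegral_coord {d : ℕ} (t : Fin d → Set ℝ) (ht : ∀ j, MeasurableSet (t j))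
    (i : Fin d) :
    ∫ x in (WithLp.ofLp ⁻¹' Set.univ.pi t : Set (Euc d)), x i ∂(volume : Measure (Euc d))
      = ∏ j, ∫ z, (t j).indicator (fun z => if j = i then z else 1) z := by
  rw [← pi_setIntegral_coord t ht i]
  exact (EuclideanSpace.volume_preserving_symm_measurableEquiv_toLp (Fin d)).setIntegral_preimage_emb
    (MeasurableEquiv.measurableEmbedding _) (fun y => y i) (Set.univ.pi t)

theorem euc_vol_pi (d : ℕ) (t : Fin d → Set ℝ) (ht : ∀ i, MeasurableSet (t i)) :
    (volume : Measure (Euc d)) (WithLp.ofLp ⁻¹' Set.univ.pi t) = ∏ i, volume (t i) :=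
  ((EuclideanSpace.volume_preserving_symm_measurableEquiv_toLp (Fin d)).measure_preimage
    (MeasurableSet.univ_pi ht).nullMeasurableSet).trans (volume_pi_pi t)

def tt (d : ℕ) (α β s : ℝ) : Fin d → Set ℝ :=
  fun j => if (j : ℕ) = 0 then Icc α β else Icc (-s) s

def box (d : ℕ) (α β s : ℝ) : Set (Euc d) := WithLp.ofLp ⁻¹' Set.univ.pi (tt d α β s)

theorem tt_measurable (d : ℕ) (α β s : ℝ) (j : Fin d) : MeasurableSet (tt d α β s j) := by
  unfold tt; split <;> exact measurableSet_Icc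

theorem box_measurable (d : ℕ) (α β s : ℝ) : MeasurableSet (box d α β s) :=
  (MeasurableSet.univ_pi (tt_measurable d α β s)).preimage (WithLp.measurable_ofLp 2 _)

theorem prod_split {d : ℕ} (hd : 0 < d) {M : Type*} [CommMonoid M] (f : Fin d → M)
    (a b : M) (hf : ∀ j, f j = if (j:ℕ) = 0 then a else b) :
    ∏ j, f j = a * b ^ (d - 1) := by
  have hi : (⟨0, hd⟩ : Fin d) ∈ Finset.univ := Finset.mem_univ _
  rw [← Finset.mul_prod_erase Finset.univ f hi, hf]
  simp only [if_pos rfl]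
  congr 1
  rw [Finset.prod_congr rfl (fun j hj => by
    rw [hf j, if_neg]
    intro h
    exact (Finset.mem_erase.mp hj).1 (Fin.ext h)), Finset.prod_const,
    Finset.card_erase_of_mem hi, Finset.card_univ, Fintype.card_fin]

theorem box_vol (d : ℕ) (hd : 0 < d) (α β s : ℝ) :
    (volume : Measure (Euc d)) (box d α β s)
      = ENNReal.ofReal (β - α) * ENNReal.ofReal (2 * s) ^ (d - 1) := by
  rw [box, euc_vol_pi d _ (tt_measurable d α β s)]
  refine prod_split hd _ _ _ fun j => ?_
  unfold tt
  split
  · rw [Real.volume_Icc]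
  · rw [Real.volume_Icc]; ring_nf

theorem factor_id (a b : ℝ) (hab : a ≤ b) :
    ∫ z, (Icc a b).indicator (fun z => z) z = (b^2 - a^2)/2 := by
  rw [integral_indicator measurableSet_Icc, MeasureTheory.integral_Icc_eq_integral_Ioc,
    ← intervalIntegral.integral_of_le hab, integral_id]

theorem norm_le_of_coords {d : ℕ} (x : Euc d) (M : ℝ) (hM : 0 ≤ M) (h : ∀ j, |x j| ≤ M) :
    ‖x‖ ≤ Real.sqrt d * M := by
  rw [EuclideanSpace.norm_eq, show Real.sqrt d * M = Real.sqrt (d * M^2) by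
    rw [Real.sqrt_mul (Nat.cast_nonneg d), Real.sqrt_sq hM]]
  apply Real.sqrt_le_sqrt
  calc ∑ j, ‖x j‖^2 ≤ ∑ _j : Fin d, M^2 := by
        apply Finset.sum_le_sum
        intro j _
        have := h j
        rw [Real.norm_eq_abs]
        nlinarith [abs_nonneg (x j)]
    _ = d * M^2 := by rw [Finset.sum_const, Finset.card_univ, Fintype.card_fin, nsmul_eq_mul]

theorem box_coord_bound {d : ℕ} {α β s : ℝ} {x : Euc d} (hx : x ∈ box d α β s) (j : Fin d) :
    |x j| ≤ max (max |α| |β|) |s| := by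
  have hj := hx j (Set.mem_univ j)
  unfold tt at hj
  split at hj
  · rcases hj with ⟨h1, h2⟩
    apply abs_le.2
    constructor
    · calc -(max (max |α| |β|) |s|) ≤ -|α| := by
            simp only [neg_le_neg_iff]
            exact le_max_of_le_left (le_max_left _ _)
        _ ≤ α := neg_abs_le α
        _ ≤ x j := h1
    · exact h2.trans ((le_abs_self β).trans (le_max_of_le_left (le_max_right _ _)))
  · rcases hj with ⟨h1, h2⟩
    apply abs_le.2
    refine ⟨?_, h2.trans ((le_abs_self s).trans (le_max_right _ _))⟩
    calc -(max (max |α| |β|) |s|) ≤ -|s| := by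
          simp only [neg_le_neg_iff]; exact le_max_right _ _
      _ ≤ -s := neg_le_neg (le_abs_self s)
      _ ≤ x j := h1

theorem box_vol_ne_top (d : ℕ) (hd : 0 < d) (α β s : ℝ) :
    (volume : Measure (Euc d)) (box d α β s) ≠ ⊤ := by
  rw [box_vol d hd]
  exact ENNReal.mul_ne_top ENNReal.ofReal_ne_top (ENNReal.pow_ne_top ENNReal.ofReal_ne_top)

theorem box_integrable {d : ℕ} (hd : 0 < d) (α β s : ℝ) :
    IntegrableOn (fun x : Euc d => x) (box d α β s) volume := by
  apply Measure.integrableOn_of_bounded (M := Real.sqrt d * (max (max |α| |β|) |s|))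
    (box_vol_ne_top d hd α β s) aestronglyMeasurable_id
  rw [ae_restrict_iff' (box_measurable d α β s)]
  filter_upwards with x hx
  exact norm_le_of_coords x _ (le_trans (abs_nonneg s) (le_max_right _ _))
    (box_coord_bound hx)

theorem box_integral_coord {d : ℕ} (hd : 0 < d) (α β s : ℝ) (hab : α ≤ β) (hs : 0 ≤ s) (i : Fin d) :
    ∫ x in box d α β s, x i ∂(volume : Measure (Euc d))
      = if (i:ℕ) = 0 then (β^2-α^2)/2 * (2*s)^(d-1) else 0 := by
  rw [box, euc_setIntegral_coord _ (tt_measurable d α β s) i]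
  by_cases hi : (i:ℕ) = 0
  · rw [if_pos hi]
    refine prod_split hd _ _ _ fun j => ?_
    unfold tt
    by_cases hj : (j:ℕ) = 0
    · rw [if_pos hj, if_pos hj]
      have hji : j = i := Fin.ext (hj.trans hi.symm)
      subst hji
      simp only [eq_self_iff_true, if_true]
      exact factor_id α β hab
    · rw [if_neg hj, if_neg hj]
      have hji : j ≠ i := fun h => hj (h ▸ hi)
      simp only [if_neg hji]
      rw [integral_indicator measurableSet_Icc]
      simp only [integral_const, MeasurableSet.univ, Measure.restrict_apply, Set.univ_inter,
        smul_eq_mul, mul_one]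
      rw [measureReal_restrict_apply MeasurableSet.univ, Set.univ_inter,
        Real.volume_real_Icc_of_le (by linarith)]
      ring
  · rw [if_neg hi]
    apply Finset.prod_eq_zero (Finset.mem_univ i)
    unfold tt
    rw [if_neg hi]
    simp only [eq_self_iff_true, if_true]
    rw [factor_id (-s) s]
    · ring
    · linarith

theorem box_integral_vec {d : ℕ} (hd : 0 < d) (α β s : ℝ) (hab : α ≤ β) (hs : 0 ≤ s) :
    ∫ x in box d α β s, x ∂(volume : Measure (Euc d))
      = EuclideanSpace.single (⟨0, hd⟩ : Fin d) ((β^2-α^2)/2 * (2*s)^(d-1)) := by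
  ext i
  have h1 : (∫ x in box d α β s, x ∂(volume : Measure (Euc d))) i
      = ∫ x in box d α β s, x i ∂(volume : Measure (Euc d)) := by
    have := (EuclideanSpace.proj (𝕜 := ℝ) i).integral_comp_comm (box_integrable hd α β s)
    simpa using this.symm
  rw [h1, box_integral_coord hd α β s hab hs i, EuclideanSpace.single_apply]
  by_cases hi : (i:ℕ) = 0
  · rw [if_pos hi, if_pos (Fin.ext hi)]
  · rw [if_neg hi, if_neg (fun h => hi (by rw [h]))]

theorem com_box {d : ℕ} (hd : 0 < d) (s : ℝ) (hs : 0 < s) :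
    centerOfMass (box d 0 (1/2) s) = EuclideanSpace.single (⟨0, hd⟩ : Fin d) (1/4 : ℝ) := by
  rw [centerOfMass, box_vol d hd, box_integral_vec hd 0 (1/2) s (by norm_num) hs.le]
  rw [ENNReal.toReal_mul, ENNReal.toReal_pow, ENNReal.toReal_ofReal (by norm_num : (0:ℝ) ≤ 1/2 - 0),
    ENNReal.toReal_ofReal (by linarith)]
  have h2s : (0:ℝ) < (2*s)^(d-1) := by positivity
  ext i
  simp only [PiLp.smul_apply, EuclideanSpace.single_apply, smul_eq_mul]
  by_cases hi : i = (⟨0, hd⟩ : Fin d)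
  · rw [if_pos hi, if_pos hi]
    field_simp
    ring
  · rw [if_neg hi, if_neg hi, mul_zero]


theorem abs_coord_le {d : ℕ} (x : Euc d) (i : Fin d) : |x i| ≤ ‖x‖ := by
  rw [EuclideanSpace.norm_eq]
  rw [show |x i| = Real.sqrt (|x i|^2) by rw [Real.sqrt_sq_eq_abs, abs_abs]]
  apply Real.sqrt_le_sqrt
  rw [sq_abs, show (x i)^2 = ‖x i‖^2 from (sq_abs _).symm]
  exact Finset.single_le_sum (f := fun j => ‖x j‖^2) (fun j _ => by positivity) (Finset.mem_univ i)

theorem aConst_pos {d : ℕ} (hd : 0 < d) : 0 < aConst d := by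
  have h1 : 0 < (d:ℝ)/2 := by positivity
  have := Real.Gamma_pos_of_pos h1
  have h2 : (0:ℝ) < Real.pi ^ ((d : ℝ) / 2) := Real.rpow_pos_of_pos Real.pi_pos _
  unfold aConst
  positivity

theorem sphere_lower {d : ℕ} (hd : 0 < d) (A : Set (Euc d)) (hA : MeasurableSet A) (c : ℝ)
    (h : ∀ x ∈ A, x ≠ 0 → x ∈ ball (0:Euc d) 1 ∧ c ≤ 1 / (aConst d * ‖x‖ ^ (d-1))) :
    ENNReal.ofReal c * volume A ≤ sphericalUniform d A := by
  rw [sphericalUniform, withDensity_apply _ hA, ← setLIntegral_const A (ENNReal.ofReal c)]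
  apply lintegral_mono_ae
  have h0 : (volume.restrict A) {(0 : Euc d)} = 0 := by
    haveI : Nontrivial (Euc d) := ⟨⟨0, EuclideanSpace.single (⟨0, hd⟩ : Fin d) 1, fun hcon => by
      have := congrFun (congrArg WithLp.ofLp hcon.symm) (⟨0, hd⟩ : Fin d)
      rw [EuclideanSpace.single_apply, if_pos rfl] at this
      exact one_ne_zero this⟩⟩
    exact le_antisymm (le_trans (Measure.restrict_le_self _)
      (le_of_eq (measure_singleton _))) zero_le
  have hne : ∀ᵐ x ∂(volume.restrict A), x ≠ (0 : Euc d) := by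
    rw [ae_iff]
    convert h0 using 2
    ext x; simp
  filter_upwards [ae_restrict_mem hA, hne] with x hxA hx0
  obtain ⟨hb, hc⟩ := h x hxA hx0
  rw [Set.indicator_of_mem ((Set.mem_diff _).mpr ⟨hb, by simpa using hx0⟩)]
  exact ENNReal.ofReal_le_ofReal hc

theorem sphere_upper {d : ℕ} (A : Set (Euc d)) (hA : MeasurableSet A) (c : ℝ) (hc : 0 ≤ c)
    (h : ∀ x ∈ A, x ∈ ball (0:Euc d) 1 → x ≠ 0 → 1 / (aConst d * ‖x‖ ^ (d-1)) ≤ c) :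
    sphericalUniform d A ≤ ENNReal.ofReal c * volume A := by
  rw [sphericalUniform, withDensity_apply _ hA, ← setLIntegral_const A (ENNReal.ofReal c)]
  apply lintegral_mono_ae
  filter_upwards [ae_restrict_mem hA] with x hxA
  by_cases hx : x ∈ ball (0:Euc d) 1 \ {0}
  · rw [Set.indicator_of_mem hx]
    exact ENNReal.ofReal_le_ofReal (h x hxA hx.1 (by simpa using hx.2))
  · rw [Set.indicator_of_notMem hx]
    simp

theorem norm_single_eq {d : ℕ} (hd : 0 < d) (c : ℝ) :
    ‖(EuclideanSpace.single (⟨0, hd⟩ : Fin d) c : Euc d)‖ = |c| := by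
  rw [EuclideanSpace.norm_eq]
  have : ∀ j : Fin d, ‖(EuclideanSpace.single (⟨0, hd⟩ : Fin d) c : Euc d) j‖^2
      = if j = (⟨0, hd⟩ : Fin d) then c^2 else 0 := by
    intro j
    rw [EuclideanSpace.single_apply]
    split <;> simp [Real.norm_eq_abs, sq_abs]
  simp_rw [this]
  rw [Finset.sum_ite_eq' Finset.univ _ (fun _ => c^2)]
  simp [Real.sqrt_sq_eq_abs]

theorem single_mem_msupport {d : ℕ} (hd : 0 < d) :
    (EuclideanSpace.single (⟨0, hd⟩ : Fin d) (1/4 : ℝ) : Euc d)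
      ∈ msupport (sphericalUniform d) := by
  set b : Euc d := EuclideanSpace.single (⟨0, hd⟩ : Fin d) (1/4 : ℝ) with hb
  have hnb : ‖b‖ = 1/4 := by rw [hb, norm_single_eq hd]; norm_num
  intro U hU hbU
  obtain ⟨r, hr, hball⟩ := Metric.isOpen_iff.mp hU b hbU
  set r' := min r (1/8) with hr'
  have hr'0 : 0 < r' := lt_min hr (by norm_num)
  have hsub : ball b r' ⊆ U := (ball_subset_ball (min_le_left _ _)).trans hball
  have ha := aConst_pos hd
  have key : ENNReal.ofReal (1/aConst d) * volume (ball b r') ≤ sphericalUniform d (ball b r') := by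
    apply sphere_lower hd _ measurableSet_ball
    intro x hx hx0
    have hdist : dist x b < 1/8 := lt_of_lt_of_le hx (min_le_right _ _)
    have hnx : ‖x‖ < 1 := by
      calc ‖x‖ = ‖b + (x - b)‖ := by rw [add_sub_cancel]
        _ ≤ ‖b‖ + ‖x - b‖ := norm_add_le _ _
        _ < 1/4 + 1/8 := by
            rw [hnb]
            have : ‖x - b‖ = dist x b := by rw [dist_eq_norm]
            linarith [this ▸ hdist]
        _ < 1 := by norm_num
    refine ⟨mem_ball_zero_iff.mpr hnx, ?_⟩
    have hxpos : 0 < ‖x‖ := norm_pos_iff.mpr hx0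
    have hpow : ‖x‖ ^ (d-1) ≤ 1 := pow_le_one₀ hxpos.le hnx.le
    have hppos : 0 < ‖x‖ ^ (d-1) := pow_pos hxpos _
    apply one_div_le_one_div_of_le (by positivity)
    nlinarith
  have hpos : (0:ℝ≥0∞) < ENNReal.ofReal (1/aConst d) * volume (ball b r') := by
    apply ENNReal.mul_pos
    · simp [ENNReal.ofReal_pos.mpr (by positivity : (0:ℝ) < 1/aConst d)]
      positivity
    · exact (measure_ball_pos volume b hr'0).ne'
  calc (0:ℝ≥0∞) < ENNReal.ofReal (1/aConst d) * volume (ball b r') := hpos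
    _ ≤ sphericalUniform d (ball b r') := key
    _ ≤ sphericalUniform d U := measure_mono hsub

-- depends on t6/t7 content; new lemmas
theorem sum_split {d : ℕ} (hd : 0 < d) (f : Fin d → ℝ) (a b : ℝ)
    (hf : ∀ j, f j ≤ if (j:ℕ) = 0 then a else b) :
    ∑ j, f j ≤ a + (d-1 : ℕ) * b := by
  have hi : (⟨0, hd⟩ : Fin d) ∈ Finset.univ := Finset.mem_univ _
  calc ∑ j, f j ≤ ∑ j : Fin d, (if (j:ℕ) = 0 then a else b) :=
        Finset.sum_le_sum (fun j _ => hf j)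
    _ = a + (d-1:ℕ) * b := by
        rw [← Finset.add_sum_erase Finset.univ _ hi]
        simp only [if_pos rfl]
        congr 1
        rw [Finset.sum_congr rfl (fun j hj => by
          rw [if_neg]
          intro h
          exact (Finset.mem_erase.mp hj).1 (Fin.ext h)), Finset.sum_const,
          Finset.card_erase_of_mem hi, Finset.card_univ, Fintype.card_fin, nsmul_eq_mul]

theorem box_convex (d : ℕ) (α β s : ℝ) : Convex ℝ (box d α β s) := by
  intro x hx y hy p q hp hq hpq
  intro j _
  have hxj := hx j (Set.mem_univ j)
  have hyj := hy j (Set.mem_univ j)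
  have hcoord : (p • x + q • y) j = p * x j + q * y j := rfl
  unfold tt at *
  split at hxj <;> rename_i h
  · rw [if_pos h] at hyj ⊢
    rw [hcoord]
    exact (convex_Icc α β) hxj hyj hp hq hpq
  · rw [if_neg h] at hyj ⊢
    rw [hcoord]
    exact (convex_Icc (-s) s) hxj hyj hp hq hpq

theorem S_subset_ball {d : ℕ} (hd : 0 < d) (s : ℝ) (hs0 : 0 < s)
    (hsd : s ≤ 1/(2*Real.sqrt d)) :
    box d 0 (1/2) s ⊆ ball (0 : Euc d) 1 := by
  have hsd0 : (0:ℝ) < Real.sqrt d := Real.sqrt_pos.mpr (by exact_mod_cast hd)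
  intro x hx
  rw [mem_ball_zero_iff, EuclideanSpace.norm_eq]
  have hsq : s^2 ≤ 1/(4*d) := by
    have h1 : s * (2*Real.sqrt d) ≤ 1 := by
      rw [← le_div_iff₀ (by positivity)] at *
      exact hsd.trans (le_of_eq (by ring))
    have h2 : Real.sqrt d * Real.sqrt d = d := Real.mul_self_sqrt (Nat.cast_nonneg d)
    have hd1 : (1:ℝ) ≤ d := by exact_mod_cast hd
    rw [le_div_iff₀ (by positivity)]
    have h3 : (s*(2*Real.sqrt d))*(s*(2*Real.sqrt d)) ≤ 1 :=
      mul_le_one₀ h1 (by positivity) h1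
    nlinarith [h3, h2]
  have hsum : ∑ j, ‖x j‖^2 ≤ (1/2)^2 + (d-1:ℕ) * s^2 := by
    apply sum_split hd
    intro j
    have hxj := hx j (Set.mem_univ j)
    unfold tt at hxj
    split at hxj <;> rename_i h
    · rw [if_pos h, Real.norm_eq_abs]
      rcases hxj with ⟨h1, h2⟩
      nlinarith [abs_nonneg (x j), abs_le.mpr (⟨by linarith, h2⟩ : -(1/2:ℝ) ≤ x j ∧ x j ≤ 1/2)]
    · rw [if_neg h, Real.norm_eq_abs]
      rcases hxj with ⟨h1, h2⟩
      nlinarith [abs_nonneg (x j), abs_le.mpr (⟨h1, h2⟩ : -s ≤ x j ∧ x j ≤ s)]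
  have htot : ∑ j, ‖x j‖^2 ≤ 1/2 := by
    have hcast : ((d-1:ℕ):ℝ) ≤ d := by
      have : (d-1:ℕ) ≤ d := Nat.sub_le d 1
      exact_mod_cast this
    have hd0' : (0:ℝ) < d := by exact_mod_cast hd
    have : ((d-1:ℕ):ℝ) * s^2 ≤ (d:ℝ) * (1/(4*d)) := by
      apply mul_le_mul hcast hsq (by positivity) (by positivity)
    have h4 : (d:ℝ) * (1/(4*(d:ℝ))) = 1/4 := by field_simp
    calc ∑ j, ‖x j‖^2 ≤ (1/2)^2 + (d-1:ℕ) * s^2 := hsum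
      _ ≤ (1/2)^2 + 1/4 := by rw [h4] at this; linarith
      _ = 1/2 := by norm_num
  calc Real.sqrt (∑ j, ‖x j‖^2) ≤ Real.sqrt (1/2) := Real.sqrt_le_sqrt htot
    _ < Real.sqrt 1 := Real.sqrt_lt_sqrt (by norm_num) (by norm_num)
    _ = 1 := Real.sqrt_one

theorem half_subset {d : ℕ} (hd : 0 < d) (s : ℝ) (hs0 : 0 < s)
    (hcom : centerOfMass (box d 0 (1/2) s)
      = EuclideanSpace.single (⟨0, hd⟩ : Fin d) (1/4 : ℝ)) :
    halfDilation (box d 0 (1/2) s) ⊆ box d (1/8) (3/8) (s/2) := by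
  rintro z ⟨x, hx, rfl⟩
  set b : Euc d := EuclideanSpace.single (⟨0, hd⟩ : Fin d) (1/4 : ℝ) with hbdef
  show centerOfMass (box d 0 (1/2) s) + (2⁻¹:ℝ) • (x - centerOfMass (box d 0 (1/2) s))
      ∈ box d (1/8) (3/8) (s/2)
  rw [hcom]
  intro j _
  have hxj := hx j (Set.mem_univ j)
  have hz : (b + (2⁻¹:ℝ) • (x - b)) j = b j + 2⁻¹ * (x j - b j) := rfl
  unfold tt at hxj ⊢
  split at hxj <;> rename_i h
  · have hbj : b j = 1/4 := by
      rw [hbdef, EuclideanSpace.single_apply, if_pos (Fin.ext h)]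
    rw [if_pos h, hz, hbj]
    rcases hxj with ⟨h1, h2⟩
    exact ⟨by linarith, by linarith⟩
  · have hbj : b j = 0 := by
      rw [hbdef, EuclideanSpace.single_apply, if_neg (fun hc => h (by rw [hc]))]
    rw [if_neg h, hz, hbj]
    rcases hxj with ⟨h1, h2⟩
    exact ⟨by linarith, by linarith⟩

theorem arith {d : ℕ} (hd : 2 < d) (C a sd s : ℝ) (hC : 1 ≤ C) (ha : 0 < a)
    (hsd : 0 < sd) (hs : 0 < s)
    (hsε : s^(d-2) < ((2:ℝ)^(d-1)/(a * sd^(d-1))) / (C * 8^(d-1)/(4*a))) :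
    C * (8^(d-1)/a * (1/4 * s^(d-1))) < 1/(a * (sd*s)^(d-1)) * (s * (2*s)^(d-1)) := by
  have hC0 : (0:ℝ) < C := lt_of_lt_of_le one_pos hC
  have e1 : 1/(a * (sd*s)^(d-1)) * (s * (2*s)^(d-1))
      = (2:ℝ)^(d-1)/(a * sd^(d-1)) * s := by
    rw [mul_pow, mul_pow]
    have h1 : s^(d-1) ≠ 0 := by positivity
    field_simp
  have e2 : C * (8^(d-1)/a * (1/4 * s^(d-1))) = (C * 8^(d-1)/(4*a)) * s^(d-2) * s := by
    have hexp : d - 1 = (d-2)+1 := by omega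
    rw [hexp, pow_succ]
    field_simp
    ring
  rw [e1, e2]
  have hA1 : (0:ℝ) < C * 8^(d-1)/(4*a) := by positivity
  rw [mul_lt_mul_iff_of_pos_right hs]
  calc (C * 8^(d-1)/(4*a)) * s^(d-2)
      < (C * 8^(d-1)/(4*a)) * (((2:ℝ)^(d-1)/(a * sd^(d-1))) / (C * 8^(d-1)/(4*a))) :=
        by exact mul_lt_mul_of_pos_left hsε hA1
    _ = (2:ℝ)^(d-1)/(a * sd^(d-1)) := by
        rw [mul_comm, div_mul_cancel₀ _ hA1.ne']


/-- for `d > 2` the spherical uniform distribution is not doubling. -/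
theorem stmt_5 {d : ℕ} (hd : 2 < d) :
    ∀ C : ℝ, 1 ≤ C → ∃ S : Set (Euc d),
      S ⊆ ball (0 : Euc d) 1 ∧ Convex ℝ S ∧
      0 < volume S ∧ volume S < ⊤ ∧
      centerOfMass S ∈ msupport (sphericalUniform d) ∧
      ENNReal.ofReal C * sphericalUniform d (halfDilation S) < sphericalUniform d S := by
  intro C hC
  have hd0 : 0 < d := by omega
  have ha : 0 < aConst d := aConst_pos hd0
  have hC0 : (0:ℝ) < C := lt_of_lt_of_le one_pos hC
  have hsd0 : (0:ℝ) < Real.sqrt d := Real.sqrt_pos.mpr (by exact_mod_cast hd0)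
  set a := aConst d with hadef
  set ε := ((2:ℝ)^(d-1)/(a * Real.sqrt d^(d-1))) / (C * 8^(d-1)/(4*a)) with hε
  have hε0 : 0 < ε := by positivity
  set s := min (1/(2*Real.sqrt d)) (min 1 (ε/2)) with hsdef
  have hs0 : 0 < s := lt_min (by positivity) (lt_min one_pos (by positivity))
  have hs1 : s ≤ 1 := (min_le_right _ _).trans (min_le_left _ _)
  have hsd2 : s ≤ 1/(2*Real.sqrt d) := min_le_left _ _
  have hsε : s^(d-2) < ε := by
    calc s^(d-2) ≤ s := pow_le_of_le_one hs0.le hs1 (by omega)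
      _ ≤ ε/2 := (min_le_right _ _).trans (min_le_right _ _)
      _ < ε := by linarith
  -- the three boxes
  set S := box d 0 (1/2) s with hSdef
  set B := box d 0 s s with hBdef
  set Bh := box d (1/8) (3/8) (s/2) with hBhdef
  have hcom : centerOfMass S = EuclideanSpace.single (⟨0, hd0⟩ : Fin d) (1/4 : ℝ) :=
    com_box hd0 s hs0
  have hSball : S ⊆ ball (0 : Euc d) 1 := S_subset_ball hd0 s hs0 hsd2
  have hsdnorm : Real.sqrt d * s ≤ 1/2 := by
    have := mul_le_mul_of_nonneg_left hsd2 hsd0.le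
    calc Real.sqrt d * s ≤ Real.sqrt d * (1/(2*Real.sqrt d)) := this
      _ = 1/2 := by field_simp
  -- B ⊆ S
  have hBS : B ⊆ S := by
    intro x hx j hj
    have hxj := hx j (Set.mem_univ j)
    unfold tt at hxj ⊢
    split at hxj <;> rename_i h
    · rw [if_pos h]
      rcases hxj with ⟨h1, h2⟩
      have hd1 : (1:ℝ) ≤ Real.sqrt d := by
        rw [show (1:ℝ) = Real.sqrt 1 from Real.sqrt_one.symm]
        exact Real.sqrt_le_sqrt (Nat.one_le_cast.mpr hd0)
      have hshalf : s ≤ 1/2 := by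
        have h2 : 1/(2*Real.sqrt d) ≤ 1/2 := by
          apply one_div_le_one_div_of_le (by norm_num)
          nlinarith
        linarith [hsd2]
      exact ⟨h1, h2.trans hshalf⟩
    · rw [if_neg h]; exact hxj
  -- lower bound on μ B
  have hlow : ENNReal.ofReal (1/(a * (Real.sqrt d * s)^(d-1))) * volume B
      ≤ sphericalUniform d B := by
    apply sphere_lower hd0 _ (box_measurable d 0 s s)
    intro x hx hx0
    have hcb : ∀ j, |x j| ≤ s := by
      intro j
      have := box_coord_bound hx j
      have habs : max (max |(0:ℝ)| |s|) |s| = s := by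
        rw [abs_of_nonneg hs0.le, abs_zero]
        rw [max_eq_right hs0.le, max_self]
      rwa [habs] at this
    have hnx : ‖x‖ ≤ Real.sqrt d * s := norm_le_of_coords x s hs0.le hcb
    have hxpos : 0 < ‖x‖ := norm_pos_iff.mpr hx0
    refine ⟨mem_ball_zero_iff.mpr (by linarith), ?_⟩
    apply one_div_le_one_div_of_le (by positivity)
    exact mul_le_mul_of_nonneg_left (pow_le_pow_left₀ (norm_nonneg x) hnx _) ha.le
  -- upper bound on μ Bh
  have hup : sphericalUniform d Bh ≤ ENNReal.ofReal (8^(d-1)/a) * volume Bh := by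
    apply sphere_upper _ (box_measurable d (1/8) (3/8) (s/2)) _ (by positivity)
    intro x hx hxb hx0
    have hxj := hx (⟨0, hd0⟩ : Fin d) (Set.mem_univ _)
    unfold tt at hxj
    rw [if_pos rfl] at hxj
    have h8 : (1/8 : ℝ) ≤ ‖x‖ := by
      calc (1/8:ℝ) ≤ x (⟨0, hd0⟩ : Fin d) := hxj.1
        _ ≤ |x (⟨0, hd0⟩ : Fin d)| := le_abs_self _
        _ ≤ ‖x‖ := abs_coord_le x _
    have hpow : ((1:ℝ)/8)^(d-1) ≤ ‖x‖^(d-1) := pow_le_pow_left₀ (by norm_num) h8 _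
    have heq : 1/(a * ((1:ℝ)/8)^(d-1)) = 8^(d-1)/a := by
      rw [show ((1:ℝ)/8) = (8:ℝ)⁻¹ by norm_num, inv_pow]
      rw [eq_div_iff ha.ne']
      field_simp
    calc 1/(a * ‖x‖^(d-1)) ≤ 1/(a * ((1:ℝ)/8)^(d-1)) := by
          apply one_div_le_one_div_of_le (by positivity)
          exact mul_le_mul_of_nonneg_left hpow ha.le
      _ = 8^(d-1)/a := heq
  have hhalf : halfDilation S ⊆ Bh := half_subset hd0 s hs0 hcom
  -- volumes
  have hvolB : volume B = ENNReal.ofReal (s * (2*s)^(d-1)) := by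
    rw [hBdef, box_vol d hd0, ENNReal.ofReal_mul hs0.le, ENNReal.ofReal_pow (by positivity)]
    norm_num
  have hvolBh : volume Bh = ENNReal.ofReal (1/4 * s^(d-1)) := by
    rw [hBhdef, box_vol d hd0, ENNReal.ofReal_mul (by norm_num : (0:ℝ) ≤ 1/4),
      ENNReal.ofReal_pow (by positivity)]
    norm_num
    rw [show (2:ℝ≥0∞) * ENNReal.ofReal (s/2) = ENNReal.ofReal s by
      rw [← ENNReal.ofReal_ofNat 2, ← ENNReal.ofReal_mul (by norm_num)]; ring_nf]
  -- key strict inequality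
  have hkey : C * (8^(d-1)/a * (1/4 * s^(d-1)))
      < 1/(a * (Real.sqrt d * s)^(d-1)) * (s * (2*s)^(d-1)) :=
    arith hd C a (Real.sqrt d) s hC ha hsd0 hs0 hsε
  refine ⟨S, hSball, box_convex d 0 (1/2) s, ?_, ?_, ?_, ?_⟩
  · rw [hSdef, box_vol d hd0]
    exact ENNReal.mul_pos (ENNReal.ofReal_pos.mpr (by norm_num)).ne'
      (pow_ne_zero _ (ENNReal.ofReal_pos.mpr (by positivity)).ne')
  · rw [hSdef, box_vol d hd0]
    exact lt_top_iff_ne_top.mpr (ENNReal.mul_ne_top ENNReal.ofReal_ne_top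
      (ENNReal.pow_ne_top ENNReal.ofReal_ne_top))
  · rw [hcom]
    exact single_mem_msupport hd0
  · calc ENNReal.ofReal C * sphericalUniform d (halfDilation S)
        ≤ ENNReal.ofReal C * sphericalUniform d Bh :=
          mul_le_mul_right (measure_mono hhalf) _
      _ ≤ ENNReal.ofReal C * (ENNReal.ofReal (8^(d-1)/a) * volume Bh) :=
          mul_le_mul_right hup _
      _ = ENNReal.ofReal (C * (8^(d-1)/a * (1/4 * s^(d-1)))) := by
          rw [hvolBh, ← ENNReal.ofReal_mul (by positivity : (0:ℝ) ≤ 8^(d-1)/a),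
            ← ENNReal.ofReal_mul hC0.le]
      _ < ENNReal.ofReal (1/(a * (Real.sqrt d * s)^(d-1)) * (s * (2*s)^(d-1))) := by
          rw [ENNReal.ofReal_lt_ofReal_iff (by positivity)]
          exact hkey
      _ = ENNReal.ofReal (1/(a * (Real.sqrt d * s)^(d-1))) * volume B := by
          rw [hvolB, ← ENNReal.ofReal_mul (by positivity : (0:ℝ) ≤ 1/(a * (Real.sqrt d * s)^(d-1)))]
      _ ≤ sphericalUniform d B := hlow
      _ ≤ sphericalUniform d S := measure_mono hBS
end
end

section
/- Let d ≥ 1 and let P be a Borel probability measure on ℝ^d absolutely continuous with respect to ℓ_d with density p. Let φ : ℝ^d → ℝ be convex with ∂φ(ℝ^d) ⊆ B̄_d, and let T : ℝ^d → ℝ^d be a Borel map with T(x) ∈ ∂φ(x) for ℓ_d-a.e. x and T#P = U_d. Then the Monge–Ampère measure μ_φ(A) := ℓ_d(∂φ(A)) is absolutely continuous with respect to ℓ_d and, for every Borel set A ⊆ ℝ^d, ℓ_d(∂φ(A)) = a_d ∫_A p(x) |T(x)|^{d−1} dℓ_d(x). -/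
open MeasureTheory Set Metric Filter
open scoped ENNReal NNReal Topology RealInnerProductSpace

noncomputable section

namespace Stmt11Aux

variable {α : Type*} [MeasurableSpace α]

lemma lintegral_eq_sum_of_partition (μ : Measure α) (g : α → ℝ≥0∞) {ι : Type*}
    (t : Finset ι) (E : ι → Set α) (hmeas : ∀ i ∈ t, MeasurableSet (E i))
    (hdisj : ∀ i ∈ t, ∀ j ∈ t, i ≠ j → Disjoint (E i) (E j))
    (hcover : (⋃ i ∈ t, E i) = univ) :
    ∫⁻ x, g x ∂μ = ∑ i ∈ t, ∫⁻ x in E i, g x ∂μ := by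
  classical
  have key : ∀ (s : Finset ι), (∀ i ∈ s, MeasurableSet (E i)) →
      (∀ i ∈ s, ∀ j ∈ s, i ≠ j → Disjoint (E i) (E j)) →
      ∫⁻ x in ⋃ i ∈ s, E i, g x ∂μ = ∑ i ∈ s, ∫⁻ x in E i, g x ∂μ := by
    intro s
    induction s using Finset.induction_on with
    | empty => simp
    | @insert a s ha ih =>
      intro hm hd
      have hdisj2 : Disjoint (E a) (⋃ i ∈ s, E i) := by
        refine disjoint_iUnion₂_right.2 fun i hi => hd a (Finset.mem_insert_self a s) i
          (Finset.mem_insert_of_mem hi) (fun h => ha (h ▸ hi))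
      have hmU : MeasurableSet (⋃ i ∈ s, E i) :=
        MeasurableSet.biUnion s.countable_toSet (fun i hi => hm i (Finset.mem_insert_of_mem hi))
      rw [Finset.set_biUnion_insert, Measure.restrict_union hdisj2 hmU,
        lintegral_add_measure, Finset.sum_insert ha,
        ih (fun i hi => hm i (Finset.mem_insert_of_mem hi))
          (fun i hi j hj hij => hd i (Finset.mem_insert_of_mem hi) j
            (Finset.mem_insert_of_mem hj) hij)]
  have h2 := key t hmeas hdisj
  rw [hcover] at h2
  simpa [Measure.restrict_univ] using h2

/-- lintegral of a measurable everywhere-finite function against `withDensity` with an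
arbitrary (possibly non-measurable) density. -/
lemma lintegral_withDensity_arb (μ : Measure α) (f : α → ℝ≥0∞) {W : α → ℝ≥0∞}
    (hW : Measurable W) (hWfin : ∀ x, W x ≠ ∞) :
    ∫⁻ x, W x ∂(μ.withDensity f) = ∫⁻ x, f x * W x ∂μ := by
  classical
  apply le_antisymm
  · rw [lintegral_eq_iSup_eapprox_lintegral hW]
    refine iSup_le fun n => ?_
    set s := SimpleFunc.eapprox W n with hs
    have hsle : ∀ x, s x ≤ W x := fun x =>
      (le_iSup (fun n => (SimpleFunc.eapprox W n : α → ℝ≥0∞) x) n).trans_eq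
        (SimpleFunc.iSup_eapprox_apply hW x)
    have hsfin : ∀ x, s x ≠ ∞ := fun x => (SimpleFunc.eapprox_lt_top W n x).ne
    have hpart := lintegral_eq_sum_of_partition μ (fun x => f x * s x) s.range
      (fun c => s ⁻¹' {c}) (fun c _ => s.measurableSet_fiber c)
      (fun c _ c' _ hcc' => by
        refine Set.disjoint_left.2 fun x hx hx' => hcc' ?_
        simp only [mem_preimage, mem_singleton_iff] at hx hx'
        rw [← hx, ← hx'])
      (by
        ext x; simp only [mem_iUnion, mem_preimage, mem_singleton_iff, mem_univ, iff_true]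
        exact ⟨s x, s.mem_range_self x, rfl⟩)
    have hterm : ∀ c ∈ s.range, c * (μ.withDensity f) (s ⁻¹' {c})
        = ∫⁻ x in s ⁻¹' {c}, f x * s x ∂μ := by
      intro c hc
      have hcfin : c ≠ ∞ := by
        rw [SimpleFunc.mem_range] at hc
        obtain ⟨x, rfl⟩ := hc
        exact hsfin x
      rw [withDensity_apply f (s.measurableSet_fiber c), ← lintegral_const_mul' c _ hcfin]
      refine lintegral_congr_ae ((ae_restrict_iff' (s.measurableSet_fiber c)).2
        (ae_of_all _ fun x hx => ?_))
      simp only [mem_preimage, mem_singleton_iff] at hx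
      show c * f x = f x * s x
      rw [← hx, mul_comm]
    calc s.lintegral (μ.withDensity f)
        = ∑ c ∈ s.range, c * (μ.withDensity f) (s ⁻¹' {c}) := rfl
      _ = ∑ c ∈ s.range, ∫⁻ x in s ⁻¹' {c}, f x * s x ∂μ := Finset.sum_congr rfl hterm
      _ = ∫⁻ x, f x * s x ∂μ := hpart.symm
      _ ≤ ∫⁻ x, f x * W x ∂μ := lintegral_mono fun x => mul_le_mul_right (hsle x) _
  · rw [lintegral_def]
    refine iSup_le fun t => iSup_le fun ht => ?_
    set q : α → ℝ≥0∞ := fun x => t x / W x with hq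
    have hqmeas : Measurable q := t.measurable.div hW
    have hqle : ∀ x, q x ≤ f x := by
      intro x
      by_cases h0 : W x = 0
      · have : t x = 0 := le_antisymm (by simpa [h0] using ht x) (zero_le)
        simp [hq, this]
      · rw [hq]
        exact (ENNReal.div_le_iff h0 (hWfin x)).2 (ht x)
    have hqW : ∀ x, q x * W x = t x := by
      intro x
      by_cases h0 : W x = 0
      · have : t x = 0 := le_antisymm (by simpa [h0] using ht x) (zero_le)
        simp [hq, this, h0]
      · rw [hq]
        exact ENNReal.div_mul_cancel h0 (hWfin x)
    calc t.lintegral μ = ∫⁻ x, t x ∂μ := (t.lintegral_eq_lintegral μ).symm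
      _ = ∫⁻ x, q x * W x ∂μ := lintegral_congr fun x => (hqW x).symm
      _ = ∫⁻ x, W x ∂(μ.withDensity q) :=
          (lintegral_withDensity_eq_lintegral_mul μ hqmeas hW).symm
      _ ≤ ∫⁻ x, W x ∂(μ.withDensity f) := by
          refine lintegral_mono' (Measure.le_iff.2 fun E hE => ?_) le_rfl
          rw [withDensity_apply _ hE, withDensity_apply _ hE]
          exact lintegral_mono fun x => hqle x

variable {d : ℕ} {φ : Euc d → ℝ}

/-- The localized Legendre transform `h_k(y) = sup_{‖x‖ ≤ k} (⟨x,y⟩ - φ(x))`. -/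
def hFun (φ : Euc d → ℝ) (k : ℕ) (y : Euc d) : ℝ :=
  sSup ((fun x => ⟪x, y⟫ - φ x) '' closedBall (0 : Euc d) k)

lemma hFun_bddAbove (hφ : Continuous φ) (k : ℕ) (y : Euc d) :
    BddAbove ((fun x => ⟪x, y⟫ - φ x) '' closedBall (0 : Euc d) k) :=
  ((isCompact_closedBall _ _).bddAbove_image
    (((continuous_id.inner continuous_const).sub hφ).continuousOn))

lemma nonempty_img (k : ℕ) (y : Euc d) :
    ((fun x => ⟪x, y⟫ - φ x) '' closedBall (0 : Euc d) k).Nonempty :=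
  ⟨_, mem_image_of_mem _ (mem_closedBall_self (by positivity))⟩

lemma le_hFun (hφ : Continuous φ) (k : ℕ) (y x : Euc d) (hx : ‖x‖ ≤ k) :
    ⟪x, y⟫ - φ x ≤ hFun φ k y :=
  le_csSup (hFun_bddAbove hφ k y)
    (mem_image_of_mem _ (by simpa [mem_closedBall_zero_iff] using hx))

lemma hFun_le (k : ℕ) (y : Euc d) {c : ℝ}
    (h : ∀ x : Euc d, ‖x‖ ≤ k → ⟪x, y⟫ - φ x ≤ c) : hFun φ k y ≤ c :=
  csSup_le (nonempty_img k y)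
    (fun a ⟨x, hx, hax⟩ => hax ▸ h x (mem_closedBall_zero_iff.1 hx))

lemma hFun_lipschitz (hφ : Continuous φ) (k : ℕ) :
    LipschitzWith (k : ℝ≥0) (hFun φ k) := by
  refine LipschitzWith.of_dist_le_mul fun y₁ y₂ => ?_
  rw [Real.dist_eq, abs_sub_le_iff]
  have key : ∀ y₁ y₂ : Euc d, hFun φ k y₁ - hFun φ k y₂ ≤ (k : ℝ) * dist y₁ y₂ := by
    intro y₁ y₂
    rw [sub_le_iff_le_add']
    refine hFun_le k y₁ fun x hx => ?_
    have h1 : ⟪x, y₁⟫ - φ x = (⟪x, y₂⟫ - φ x) + ⟪x, y₁ - y₂⟫ := by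
      rw [inner_sub_right]; ring
    have h2 : ⟪x, y₁ - y₂⟫ ≤ (k : ℝ) * dist y₁ y₂ := by
      calc ⟪x, y₁ - y₂⟫ ≤ ‖x‖ * ‖y₁ - y₂‖ := real_inner_le_norm _ _
        _ ≤ (k : ℝ) * dist y₁ y₂ := by
            rw [dist_eq_norm]
            exact mul_le_mul_of_nonneg_right hx (norm_nonneg _)
    calc ⟪x, y₁⟫ - φ x ≤ (⟪x, y₂⟫ - φ x) + (k : ℝ) * dist y₁ y₂ := by
          rw [h1]; exact add_le_add_right h2 _
      _ ≤ hFun φ k y₂ + (k : ℝ) * dist y₁ y₂ :=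
          add_le_add_left (le_hFun hφ k y₂ x hx) _
  exact ⟨key y₁ y₂, by simpa [dist_comm] using key y₂ y₁⟩

/-- The candidate inverse map: the gradient of `hFun k`. -/
def grad (φ : Euc d → ℝ) (k : ℕ) (y : Euc d) : Euc d :=
  (InnerProductSpace.toDual ℝ (Euc d)).symm (fderiv ℝ (hFun φ k) y)

lemma grad_measurable (k : ℕ) : Measurable (grad φ k) :=
  (LinearIsometryEquiv.continuous _).measurable.comp (measurable_fderiv ℝ (hFun φ k))

/-- Key uniqueness lemma: if `y ∈ ∂φ(x)`, `‖x‖ ≤ k`, and `hFun k` is differentiable at `y`,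
then `x` is recovered as the gradient of `hFun k` at `y`. -/
lemma grad_eq (hφ : Continuous φ) {k : ℕ} {x y : Euc d}
    (hxy : y ∈ subdiff φ x) (hxk : ‖x‖ ≤ k)
    (hdiff : DifferentiableAt ℝ (hFun φ k) y) : grad φ k y = x := by
  have hval : hFun φ k y = ⟪x, y⟫ - φ x := by
    refine le_antisymm (hFun_le k y fun x' _ => ?_) (le_hFun hφ k y x hxk)
    have h := hxy x'
    have h2 : ⟪y, x' - x⟫ = ⟪x', y⟫ - ⟪x, y⟫ := by
      rw [inner_sub_right]
      rw [real_inner_comm y x', real_inner_comm y x]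
    linarith [h2 ▸ h]
  have hlow : ∀ z, hFun φ k y + ⟪x, z - y⟫ ≤ hFun φ k z := by
    intro z
    have heq : hFun φ k y + ⟪x, z - y⟫ = ⟪x, z⟫ - φ x := by
      rw [hval, inner_sub_right]; ring
    rw [heq]
    exact le_hFun hφ k z x hxk
  have hderiv : ∀ v : Euc d, fderiv ℝ (hFun φ k) y v = ⟪x, v⟫ := by
    intro v
    set F : ℝ → ℝ := fun t => hFun φ k (y + t • v) - t * ⟪x, v⟫ with hF
    have hmin : ∀ t, F 0 ≤ F t := by
      intro t
      have h := hlow (y + t • v)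
      have h2 : ⟪x, y + t • v - y⟫ = t * ⟪x, v⟫ := by
        rw [add_sub_cancel_left, real_inner_smul_right]
      simp only [hF, zero_smul, add_zero, zero_mul, sub_zero]
      linarith [h2 ▸ h]
    have hcurve : HasDerivAt (fun t : ℝ => y + t • v) v 0 := by
      simpa using ((hasDerivAt_id (0:ℝ)).smul_const v).const_add y
    have hcomp : HasDerivAt (fun t : ℝ => hFun φ k (y + t • v))
        (fderiv ℝ (hFun φ k) y v) 0 := by
      exact HasFDerivAt.comp_hasDerivAt 0 (by simpa using hdiff.hasFDerivAt) hcurve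
    have hF' : HasDerivAt F (fderiv ℝ (hFun φ k) y v - ⟪x, v⟫) 0 :=
      hcomp.sub (hasDerivAt_mul_const _)
    have hlm : IsLocalMin F 0 := Filter.Eventually.of_forall hmin
    have := hlm.hasDerivAt_eq_zero hF'
    linarith [this]
  refine ext_inner_right ℝ fun v => ?_
  rw [grad, InnerProductSpace.toDual_symm_apply]
  exact hderiv v

def Dset (φ : Euc d → ℝ) (k : ℕ) : Set (Euc d) :=
  {y | DifferentiableAt ℝ (hFun φ k) y}

lemma Dset_measurable (k : ℕ) : MeasurableSet (Dset φ k) :=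
  measurableSet_of_differentiableAt ℝ (hFun φ k)

lemma Dset_compl_null (hφ : Continuous φ) (k : ℕ) : volume (Dset φ k)ᶜ = 0 := by
  have h := (hFun_lipschitz hφ k).ae_differentiableAt (μ := volume)
  rw [ae_iff] at h
  convert h using 2
  rfl

def Zset (φ : Euc d → ℝ) (k : ℕ) : Set (Euc d) :=
  {y | y ∈ subdiff φ (grad φ k y)}

lemma Zset_measurable (hφ : Continuous φ) (k : ℕ) : MeasurableSet (Zset φ k) := by
  have hgm := grad_measurable (φ := φ) k
  have hrw : Zset φ k = ⋂ m : ℕ, {y : Euc d |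
      φ (grad φ k y) + ⟪y, (TopologicalSpace.denseSeq (Euc d) m) - grad φ k y⟫
        ≤ φ (TopologicalSpace.denseSeq (Euc d) m)} := by
    ext y
    simp only [Zset, subdiff, mem_iInter, mem_setOf_eq]
    constructor
    · intro h m; exact h _
    · intro h z
      have hcl : IsClosed {z : Euc d | φ (grad φ k y) + ⟪y, z - grad φ k y⟫ ≤ φ z} :=
        isClosed_le (continuous_const.add (continuous_const.inner
          (continuous_id.sub continuous_const))) hφ
      have hdense : Dense {z : Euc d | φ (grad φ k y) + ⟪y, z - grad φ k y⟫ ≤ φ z} := by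
        refine (TopologicalSpace.denseRange_denseSeq (Euc d)).mono ?_
        rintro z ⟨m, rfl⟩; exact h m
      have h3 := hcl.closure_eq ▸ hdense.closure_eq
      exact (h3 ▸ (mem_univ z) : z ∈ _)
  rw [hrw]
  refine MeasurableSet.iInter fun m => ?_
  refine measurableSet_le (Measurable.add (hφ.measurable.comp hgm)
    (measurable_id.inner (measurable_const.sub hgm))) measurable_const

end Stmt11Aux

open Stmt11Aux

/-- the Monge–Ampère measure `A ↦ ℓ_d(∂φ(A))` of a center-outward potential
is absolutely continuous with density `a_d · p(x) |T(x)|^{d-1}`. -/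
theorem stmt_11 {d : ℕ} (hd : 1 ≤ d) (P : Measure (Euc d)) [IsProbabilityMeasure P]
    (p : Euc d → ℝ)
    (hP : P = volume.withDensity (fun x => ENNReal.ofReal (p x)))
    (φ : Euc d → ℝ) (hconv : ConvexOn ℝ univ φ)
    (hball : (⋃ x, subdiff φ x) ⊆ closedBall (0 : Euc d) 1)
    (T : Euc d → Euc d) (hTmeas : Measurable T)
    (hTsub : ∀ᵐ x ∂(volume : Measure (Euc d)), T x ∈ subdiff φ x)
    (hTpush : P.map T = sphericalUniform d) :
    (∀ A : Set (Euc d), MeasurableSet A → volume A = 0 →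
      volume (⋃ x ∈ A, subdiff φ x) = 0) ∧
    ∀ A : Set (Euc d), MeasurableSet A →
      volume (⋃ x ∈ A, subdiff φ x) =
        ∫⁻ x in A, ENNReal.ofReal (aConst d * (p x * ‖T x‖ ^ (d - 1))) := by
  -- basic setup
  haveI : Nontrivial (Euc d) := by
    refine ⟨EuclideanSpace.single ⟨0, hd⟩ 1, 0, ?_⟩
    intro h
    have := congrArg (fun v : Euc d => v ⟨0, hd⟩) h
    simp [EuclideanSpace.single] at this
  have hφ : Continuous φ := by
    have h := hconv.continuousOn isOpen_univ
    rwa [continuousOn_univ] at h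
  have ha_pos : 0 < aConst d := by
    have h1 : 0 < Real.pi ^ ((d : ℝ) / 2) := Real.rpow_pos_of_pos Real.pi_pos _
    have h2 : 0 < Real.Gamma ((d : ℝ) / 2) := by
      apply Real.Gamma_pos_of_pos
      have : (1 : ℝ) ≤ (d : ℝ) := by exact_mod_cast hd
      linarith
    exact div_pos (by linarith) h2
  set w : Euc d → ℝ≥0∞ := fun y => ENNReal.ofReal (aConst d * ‖y‖ ^ (d - 1)) with hw
  have hw_meas : Measurable w :=
    (measurable_const.mul (measurable_norm.pow_const _)).ennreal_ofReal
  have hw_fin : ∀ y, w y ≠ ∞ := fun y => ENNReal.ofReal_ne_top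
  set u : Euc d → ℝ≥0∞ := fun x => ENNReal.ofReal
    ((ball (0 : Euc d) 1 \ {0}).indicator (fun x => 1 / (aConst d * ‖x‖ ^ (d - 1))) x) with hu
  have hBmeas : MeasurableSet (ball (0 : Euc d) 1 \ {0}) :=
    measurableSet_ball.diff (measurableSet_singleton 0)
  have hu_meas : Measurable u :=
    ((measurable_const.div (measurable_const.mul
      (measurable_norm.pow_const _))).indicator hBmeas).ennreal_ofReal
  have hU : sphericalUniform d = volume.withDensity u := rfl
  have huw : ∀ y ∈ ball (0 : Euc d) 1 \ {0}, u y * w y = 1 := by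
    intro y hy
    have hy0 : y ≠ 0 := fun h => hy.2 (by simp [h])
    have hpow : 0 < ‖y‖ ^ (d - 1) := by
      apply pow_pos
      simpa [norm_pos_iff] using hy0
    have hprod : 0 < aConst d * ‖y‖ ^ (d - 1) := mul_pos ha_pos hpow
    rw [hu, hw]
    simp only [indicator_of_mem hy]
    rw [← ENNReal.ofReal_mul (by positivity)]
    rw [one_div, inv_mul_cancel₀ hprod.ne']
    simp
  -- null boundary set
  have hsub_cb : ∀ {x y : Euc d}, y ∈ subdiff φ x → y ∈ closedBall (0 : Euc d) 1 :=
    fun {x y} hxy => hball (mem_iUnion.2 ⟨x, hxy⟩)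
  have hbd_null : volume (closedBall (0 : Euc d) 1 \ (ball (0 : Euc d) 1 \ {0})) = 0 := by
    have hsub : closedBall (0 : Euc d) 1 \ (ball (0 : Euc d) 1 \ {0})
        ⊆ sphere (0 : Euc d) 1 ∪ {0} := by
      intro y hy
      rcases hy with ⟨hy1, hy2⟩
      by_cases h0 : y = 0
      · exact Or.inr (by simp [h0])
      · left
        have hnb : ¬ (y ∈ ball (0 : Euc d) 1) := fun hb => hy2 ⟨hb, h0⟩
        have h1 : ‖y‖ ≤ 1 := mem_closedBall_zero_iff.1 hy1
        have h2 : ¬ ‖y‖ < 1 := fun hlt => hnb (mem_ball_zero_iff.2 hlt)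
        have h3 : ‖y‖ = 1 := le_antisymm h1 (not_lt.1 h2)
        exact mem_sphere_zero_iff_norm.2 h3
    refine measure_mono_null hsub ?_
    refine le_antisymm ((measure_union_le _ _).trans ?_) (zero_le)
    rw [Measure.addHaar_sphere, measure_singleton]
    simp
  -- P-a.e. facts
  have habs : P ≪ (volume : Measure (Euc d)) := by
    rw [hP]; exact withDensity_absolutelyContinuous _ _
  have hTae1 : ∀ᵐ x ∂P, T x ∈ subdiff φ x := habs.ae_le hTsub
  have hUnull : ∀ E : Set (Euc d), MeasurableSet E → volume E = 0 →
      sphericalUniform d E = 0 := by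
    intro E hE h0
    rw [hU, withDensity_apply _ hE, Measure.restrict_eq_zero.2 h0, lintegral_zero_measure]
  have hTD : ∀ᵐ x ∂P, ∀ k : ℕ, T x ∈ Dset φ k := by
    rw [ae_all_iff]
    intro k
    have h1 : P (T ⁻¹' (Dset φ k)ᶜ) = 0 := by
      rw [← Measure.map_apply hTmeas (Dset_measurable k).compl, hTpush]
      exact hUnull _ (Dset_measurable k).compl (Dset_compl_null hφ k)
    rw [ae_iff]
    convert h1 using 2
    rfl
  have hTmem : ∀ᵐ x ∂P, T x ∈ ball (0 : Euc d) 1 \ {0} := by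
    have h1 : P (T ⁻¹' (ball (0 : Euc d) 1 \ {0})ᶜ) = 0 := by
      rw [← Measure.map_apply hTmeas hBmeas.compl, hTpush, hU,
        withDensity_apply _ hBmeas.compl]
      have : ∀ᵐ y ∂(volume.restrict (ball (0 : Euc d) 1 \ {0})ᶜ), u y = 0 := by
        refine (ae_restrict_iff' hBmeas.compl).2 (ae_of_all _ fun y hy => ?_)
        rw [hu]
        simp only [indicator_of_notMem hy]
        simp
      rw [lintegral_congr_ae this, lintegral_zero]
    rw [ae_iff]
    convert h1 using 2
    rfl
  -- the `SS` functional
  set SS : Set (Euc d) → ℝ≥0∞ :=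
    fun A => ∫⁻ x, A.indicator (fun x => w (T x)) x ∂P with hSS
  -- Per-scale identity
  have key : ∀ (n : ℕ) (A : Set (Euc d)), MeasurableSet A → A ⊆ closedBall (0 : Euc d) n →
      volume (⋃ x ∈ A, subdiff φ x) = SS A := by
    intro n A hA hAn
    set M : Set (Euc d) := grad φ n ⁻¹' A ∩ Dset φ n ∩ Zset φ n with hM
    have hM_meas : MeasurableSet M :=
      (((grad_measurable n) hA).inter (Dset_measurable n)).inter (Zset_measurable hφ n)
    have hM_sub : M ⊆ ⋃ x ∈ A, subdiff φ x := by
      rintro y ⟨⟨hy1, _⟩, hy3⟩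
      exact mem_iUnion₂.2 ⟨grad φ n y, hy1, hy3⟩
    have hS_sub : (⋃ x ∈ A, subdiff φ x) ⊆ M ∪ (Dset φ n)ᶜ := by
      intro y hy
      rcases mem_iUnion₂.1 hy with ⟨x, hxA, hyx⟩
      by_cases hD : y ∈ Dset φ n
      · left
        have hxn : ‖x‖ ≤ (n : ℝ) := mem_closedBall_zero_iff.1 (hAn hxA)
        have hg : grad φ n y = x := grad_eq hφ hyx hxn hD
        exact ⟨⟨by rw [mem_preimage, hg]; exact hxA, hD⟩, by rw [Zset, mem_setOf_eq, hg]; exact hyx⟩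
      · exact Or.inr hD
    have hM_ball : M ⊆ closedBall (0 : Euc d) 1 := fun y hy => hsub_cb hy.2
    set M' : Set (Euc d) := M ∩ (ball (0 : Euc d) 1 \ {0}) with hM'
    have hM'_meas : MeasurableSet M' := hM_meas.inter hBmeas
    -- volume (S A) = volume M'
    have hvol : volume (⋃ x ∈ A, subdiff φ x) = volume M' := by
      apply le_antisymm
      · have hsub2 : (⋃ x ∈ A, subdiff φ x) ⊆ M' ∪ ((M \ (ball (0 : Euc d) 1 \ {0}))
            ∪ (Dset φ n)ᶜ) := by
          intro y hy
          rcases hS_sub hy with hyM | hyD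
          · by_cases hb : y ∈ ball (0 : Euc d) 1 \ {0}
            · exact Or.inl ⟨hyM, hb⟩
            · exact Or.inr (Or.inl ⟨hyM, hb⟩)
          · exact Or.inr (Or.inr hyD)
        refine (measure_mono hsub2).trans ?_
        refine (measure_union_le _ _).trans ?_
        have h1 : volume (M \ (ball (0 : Euc d) 1 \ {0}) ∪ (Dset φ n)ᶜ) = 0 := by
          refine le_antisymm ((measure_union_le _ _).trans ?_) (zero_le)
          have h2 : volume (M \ (ball (0 : Euc d) 1 \ {0})) = 0 :=
            measure_mono_null (diff_subset_diff_left hM_ball) hbd_null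
          rw [h2, Dset_compl_null hφ n]
          simp
        rw [h1, add_zero]
      · exact measure_mono (hM'.symm ▸ (Set.inter_subset_left.trans hM_sub) :
          M' ⊆ ⋃ x ∈ A, subdiff φ x)
    rw [hvol]
    -- volume M' = ∫ indicator M' w dU
    have step1 : volume M' = ∫⁻ y, M'.indicator w y ∂(sphericalUniform d) := by
      rw [hU, lintegral_withDensity_eq_lintegral_mul volume hu_meas (hw_meas.indicator hM'_meas)]
      have heq : (u * M'.indicator w) = M'.indicator (fun y => u y * w y) := by
        funext y
        simp only [Pi.mul_apply]
        by_cases hy : y ∈ M'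
        · rw [indicator_of_mem hy, indicator_of_mem hy]
        · rw [indicator_of_notMem hy, indicator_of_notMem hy, mul_zero]
      rw [heq, lintegral_indicator hM'_meas]
      have : ∫⁻ y in M', u y * w y ∂volume = ∫⁻ y in M', 1 ∂volume := by
        refine lintegral_congr_ae ((ae_restrict_iff' hM'_meas).2 (ae_of_all _ fun y hy => ?_))
        exact huw y hy.2
      rw [this, setLIntegral_one]
    -- pushforward
    have step2 : ∫⁻ y, M'.indicator w y ∂(sphericalUniform d)
        = ∫⁻ x, M'.indicator w (T x) ∂P := by
      rw [← hTpush, lintegral_map (hw_meas.indicator hM'_meas) hTmeas]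
    -- a.e. identification
    have step3 : ∫⁻ x, M'.indicator w (T x) ∂P = SS A := by
      refine lintegral_congr_ae ?_
      filter_upwards [hTae1, hTmem, hTD] with x h1 h2 h3
      by_cases hxA : x ∈ A
      · have hTM' : T x ∈ M' := by
          have hxn : ‖x‖ ≤ (n : ℝ) := mem_closedBall_zero_iff.1 (hAn hxA)
          have hg : grad φ n (T x) = x := grad_eq hφ h1 hxn (h3 n)
          refine ⟨⟨⟨?_, h3 n⟩, ?_⟩, h2⟩
          · rw [mem_preimage, hg]; exact hxA
          · rw [Zset, mem_setOf_eq, hg]; exact h1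
        rw [indicator_of_mem hTM', indicator_of_mem hxA]
      · have hTM' : T x ∉ M' := by
          rintro ⟨⟨⟨hg, hD⟩, hZ⟩, hb⟩
          rw [mem_preimage] at hg
          set k := n + Nat.ceil ‖x‖ with hk
          have hxk : ‖x‖ ≤ (k : ℝ) := by
            have := Nat.le_ceil ‖x‖
            have h4 : ((Nat.ceil ‖x‖ : ℕ) : ℝ) ≤ (k : ℝ) := by
              exact_mod_cast Nat.le_add_left _ n
            linarith
          have hgk : ‖grad φ n (T x)‖ ≤ (k : ℝ) := by
            have h5 : ‖grad φ n (T x)‖ ≤ (n : ℝ) := mem_closedBall_zero_iff.1 (hAn hg)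
            have h6 : ((n : ℕ) : ℝ) ≤ (k : ℝ) := by exact_mod_cast Nat.le_add_right n _
            linarith
          have e1 : grad φ k (T x) = x := grad_eq hφ h1 hxk (h3 k)
          have e2 : grad φ k (T x) = grad φ n (T x) := grad_eq hφ hZ hgk (h3 k)
          exact hxA (by rw [← e1, e2]; exact hg)
        rw [indicator_of_notMem hTM', indicator_of_notMem hxA]
    rw [step1, step2, step3]
  -- SS A equals the target integral, for every measurable A
  have dens : ∀ A : Set (Euc d), MeasurableSet A →
      SS A = ∫⁻ x in A, ENNReal.ofReal (aConst d * (p x * ‖T x‖ ^ (d - 1))) := by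
    intro A hA
    have hWmeas : Measurable (A.indicator (fun x => w (T x))) :=
      (hw_meas.comp hTmeas).indicator hA
    have hWfin : ∀ x, A.indicator (fun x => w (T x)) x ≠ ∞ := by
      intro x
      by_cases hx : x ∈ A
      · rw [indicator_of_mem hx]; exact hw_fin _
      · rw [indicator_of_notMem hx]; exact ENNReal.zero_ne_top
    show (∫⁻ x, A.indicator (fun x => w (T x)) x ∂P) = _
    rw [hP]
    rw [lintegral_withDensity_arb volume _ hWmeas hWfin]
    have heq : (fun x => ENNReal.ofReal (p x) * A.indicator (fun x => w (T x)) x)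
        = A.indicator (fun x => ENNReal.ofReal (aConst d * (p x * ‖T x‖ ^ (d - 1)))) := by
      funext x
      by_cases hx : x ∈ A
      · rw [indicator_of_mem hx, indicator_of_mem hx, hw]
        rcases le_or_gt 0 (p x) with hp | hp
        · rw [← ENNReal.ofReal_mul hp]
          congr 1
          ring
        · have hr : 0 ≤ ‖T x‖ ^ (d - 1) := pow_nonneg (norm_nonneg _) _
          have hle : aConst d * (p x * ‖T x‖ ^ (d - 1)) ≤ 0 := by nlinarith [mul_nonneg (mul_nonneg ha_pos.le hr) (neg_nonneg.2 hp.le)]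
          rw [ENNReal.ofReal_of_nonpos hp.le, zero_mul, ENNReal.ofReal_of_nonpos hle]
      · rw [indicator_of_notMem hx, indicator_of_notMem hx, mul_zero]
    rw [heq, lintegral_indicator hA]
  -- the limiting argument
  have final : ∀ A : Set (Euc d), MeasurableSet A →
      volume (⋃ x ∈ A, subdiff φ x) = SS A := by
    intro A hA
    set An : ℕ → Set (Euc d) := fun n => A ∩ closedBall (0 : Euc d) n with hAn
    have hAn_meas : ∀ n, MeasurableSet (An n) :=
      fun n => hA.inter measurableSet_closedBall
    have hAn_mono : Monotone An := fun m n hmn =>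
      inter_subset_inter_right _ (closedBall_subset_closedBall (by exact_mod_cast hmn))
    have hSn_mono : Monotone (fun n => ⋃ x ∈ An n, subdiff φ x) := fun m n hmn =>
      biUnion_subset_biUnion_left (hAn_mono hmn)
    have hcup : (⋃ n, ⋃ x ∈ An n, subdiff φ x) = ⋃ x ∈ A, subdiff φ x := by
      ext y
      simp only [mem_iUnion]
      constructor
      · rintro ⟨n, x, ⟨hx, _⟩, hy⟩; exact ⟨x, hx, hy⟩
      · rintro ⟨x, hx, hy⟩
        exact ⟨Nat.ceil ‖x‖, x, ⟨hx, mem_closedBall_zero_iff.2 (Nat.le_ceil _)⟩, hy⟩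
    rw [← hcup, hSn_mono.measure_iUnion]
    have hkeyn : ∀ n, volume (⋃ x ∈ An n, subdiff φ x) = SS (An n) :=
      fun n => key n (An n) (hAn_meas n) Set.inter_subset_right
    rw [iSup_congr hkeyn]
    show (⨆ n, ∫⁻ x, (An n).indicator (fun x => w (T x)) x ∂P)
      = ∫⁻ x, A.indicator (fun x => w (T x)) x ∂P
    -- monotone convergence for SS
    have hfn_meas : ∀ n : ℕ, Measurable ((An n).indicator (fun x => w (T x))) :=
      fun n => (hw_meas.comp hTmeas).indicator (hAn_meas n)
    have hfn_mono : Monotone (fun n => (An n).indicator (fun x => w (T x))) :=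
      fun m n hmn => indicator_le_indicator_of_subset (hAn_mono hmn) (fun x => zero_le)
    rw [← lintegral_iSup hfn_meas hfn_mono]
    congr 1
    funext x
    by_cases hx : x ∈ A
    · have hx' : x ∈ An (Nat.ceil ‖x‖) := ⟨hx, mem_closedBall_zero_iff.2 (Nat.le_ceil _)⟩
      rw [indicator_of_mem hx]
      apply le_antisymm
      · exact iSup_le fun n => (indicator_le_indicator_of_subset inter_subset_left
          (fun _ => zero_le) x).trans_eq (by rw [indicator_of_mem hx])
      · refine le_trans ?_ (le_iSup _ (Nat.ceil ‖x‖))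
        rw [indicator_of_mem hx']
    · rw [indicator_of_notMem hx]
      refine le_antisymm (iSup_le fun n => ?_) (zero_le)
      rw [indicator_of_notMem (fun h => hx h.1)]
  refine ⟨fun A hA h0 => ?_, fun A hA => ?_⟩
  · rw [final A hA, dens A hA]
    exact setLIntegral_measure_zero _ _ h0
  · rw [final A hA, dens A hA]
end
end

section
/- Let d ≥ 1, let P satisfy Assumption A, and let φ be a center-outward potential for P. Then ∂φ(𝒳) ∩ 𝕊_{d−1} = ∅; that is, for every x ∈ 𝒳 and every y ∈ ∂φ(x) one has |y| < 1. -/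
open MeasureTheory Set Metric Filter
open scoped ENNReal NNReal Topology RealInnerProductSpace

noncomputable section

set_option maxHeartbeats 1000000
lemma subdiff_monotone {d : ℕ} {φ : Euc d → ℝ} {a b y z : Euc d}
    (hy : y ∈ subdiff φ a) (hz : z ∈ subdiff φ b) : 0 ≤ ⟪z - y, b - a⟫ := by
  have h1 := hy b
  have h2 := hz a
  have e1 : ⟪z, a - b⟫ = -⟪z, b - a⟫ := by
    rw [show a - b = -(b - a) by abel, inner_neg_right]
  rw [inner_sub_left]
  linarith

lemma near_pointwise {d : ℕ} {φ : Euc d → ℝ} {x₀ x y z : Euc d} {ε s : ℝ}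
    (hy : y ∈ subdiff φ x₀) (hz : z ∈ subdiff φ x)
    (hy1 : ‖y‖ = 1) (hz1 : ‖z‖ ≤ 1) (hε : 0 < ε) (hs : 0 < s)
    (hv : ‖x - x₀ - s • y‖ ≤ ε / 2 * s) : ‖z - y‖ ≤ ε := by
  have hmono := subdiff_monotone hy hz
  set v := x - x₀ - s • y with hv_def
  have hxx : x - x₀ = s • y + v := by rw [hv_def]; abel
  have hinner : ⟪z - y, x - x₀⟫ = s * ⟪z - y, y⟫ + ⟪z - y, v⟫ := by
    rw [hxx, inner_add_right, real_inner_smul_right]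
  have hcs : ⟪z - y, v⟫ ≤ ‖z - y‖ * (ε / 2 * s) := by
    calc ⟪z - y, v⟫ ≤ ‖z - y‖ * ‖v‖ := real_inner_le_norm _ _
      _ ≤ ‖z - y‖ * (ε / 2 * s) := mul_le_mul_of_nonneg_left hv (norm_nonneg _)
  have hzy : ⟪z - y, y⟫ ≤ -(‖z - y‖ ^ 2) / 2 := by
    have hexp : ‖z - y‖ ^ 2 = ‖z‖ ^ 2 - 2 * ⟪z, y⟫ + ‖y‖ ^ 2 := norm_sub_sq_real z y
    have hyy : ⟪y, y⟫ = (1 : ℝ) := by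
      rw [real_inner_self_eq_norm_sq, hy1]; norm_num
    have hsub : ⟪z - y, y⟫ = ⟪z, y⟫ - 1 := by rw [inner_sub_left, hyy]
    nlinarith [norm_nonneg z]
  by_contra hcon
  push_neg at hcon
  have hn : 0 < ‖z - y‖ := hε.trans hcon
  have h3 : s * ⟪z - y, y⟫ ≤ s * (-(‖z - y‖ ^ 2) / 2) :=
    mul_le_mul_of_nonneg_left hzy hs.le
  have h4 : ε * ‖z - y‖ < ‖z - y‖ * ‖z - y‖ :=
    mul_lt_mul_of_pos_right hcon hn
  nlinarith [hmono, hinner, hcs, h3, h4, hs, hn]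

/-- `∂φ(𝒳) ∩ 𝕊_{d-1} = ∅`: every subgradient of `φ` at a point of `𝒳` has
norm strictly less than `1`. -/
theorem stmt_16 {d : ℕ} (hd : 1 ≤ d) (P : Measure (Euc d)) (p : Euc d → ℝ)
    (hA : AssumptionA P p) (φ : Euc d → ℝ)
    (hφ : IsCenterOutwardPotential P φ) :
    ∀ x ∈ interior (msupport P), ∀ y ∈ subdiff φ x, ‖y‖ < 1 := by
  intro x₀ hx₀ y hy
  by_contra hlt
  have hball : (⋃ x, subdiff φ x) ⊆ closedBall (0 : Euc d) 1 := hφ.2.1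
  have hy1 : ‖y‖ ≤ 1 := by
    have hm : y ∈ ⋃ x, subdiff φ x := mem_iUnion.2 ⟨x₀, hy⟩
    simpa [mem_closedBall, dist_zero_right] using hball hm
  have hy_eq : ‖y‖ = 1 := le_antisymm hy1 (not_lt.1 hlt)
  obtain ⟨T, hTm, hTae, hTmap⟩ := hφ.2.2
  obtain ⟨δ, hδ, hδsub⟩ := Metric.isOpen_iff.1 isOpen_interior x₀ hx₀
  set R : ℝ := ‖x₀‖ + δ with hR_def
  have hR : 0 < R := by positivity
  obtain ⟨lam, Lam, hlam, hlamLam, hbound⟩ := hA.2.2 R hR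
  have ha : 0 < aConst d := by
    have hΓ : 0 < Real.Gamma ((d : ℝ) / 2) := by
      apply Real.Gamma_pos_of_pos
      have : (1 : ℝ) ≤ (d : ℝ) := by exact_mod_cast hd
      linarith
    have hπ : (0 : ℝ) < Real.pi ^ ((d : ℝ) / 2) := Real.rpow_pos_of_pos Real.pi_pos _
    unfold aConst
    exact div_pos (by linarith) hΓ
  -- the key quantitative estimate
  have key : ∀ ε : ℝ, 0 < ε → ε ≤ 1 / 8 →
      lam * (δ / 8) ^ d / 8 ≤ (2 ^ (d - 1) / aConst d * 2 ^ d) * ε := by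
    intro ε hε hε8
    set K := ⌊1 / (4 * ε)⌋₊ with hK_def
    have hK1 : (K : ℝ) ≤ 1 / (4 * ε) := Nat.floor_le (by positivity)
    have hK2 : 1 / (4 * ε) < (K : ℝ) + 1 := Nat.lt_floor_add_one _
    have h8 : (1 : ℝ) ≤ 1 / (8 * ε) := by
      rw [le_div_iff₀ (by positivity)]; linarith
    have hK3 : 1 / (8 * ε) ≤ (K : ℝ) := by
      have hhalf : 1 / (4 * ε) = 1 / (8 * ε) + 1 / (8 * ε) := by
        field_simp
        ring
      linarith
    set r : ℝ := ε * δ / 8 with hr_def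
    have hr : 0 < r := by positivity
    set c : ℕ → Euc d := fun k => x₀ + (δ / 2 + (k : ℝ) * ε * δ) • y with hc_def
    have hs_pos : ∀ k : ℕ, 0 < δ / 2 + (k : ℝ) * ε * δ := fun k => by positivity
    have hKε : (K : ℝ) * ε ≤ 1 / 4 := by
      have h := mul_le_mul_of_nonneg_right hK1 hε.le
      have : 1 / (4 * ε) * ε = 1 / 4 := by
        field_simp
      linarith
    have hkε : ∀ k < K, (k : ℝ) * ε ≤ 1 / 4 - ε := by
      intro k hk
      have hk1 : (k : ℝ) + 1 ≤ (K : ℝ) := by exact_mod_cast hk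
      have := mul_le_mul_of_nonneg_right (show (k : ℝ) ≤ (K : ℝ) - 1 by linarith) hε.le
      nlinarith
    have hsub : ∀ k < K, ball (c k) r ⊆ ball x₀ δ := by
      intro k hk x hx
      rw [mem_ball] at hx ⊢
      have hdist : dist (c k) x₀ = δ / 2 + (k : ℝ) * ε * δ := by
        rw [hc_def, dist_eq_norm]
        simp only [add_sub_cancel_left]
        rw [norm_smul, hy_eq, Real.norm_eq_abs, abs_of_pos (hs_pos k), mul_one]
      have hk' := hkε k hk
      have hmul := mul_le_mul_of_nonneg_right hk' hδ.le
      calc dist x x₀ ≤ dist x (c k) + dist (c k) x₀ := dist_triangle _ _ _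
        _ < r + (δ / 2 + (k : ℝ) * ε * δ) := by linarith [hdist]
        _ ≤ δ := by rw [hr_def]; nlinarith
    have hdisj : (↑(Finset.range K) : Set ℕ).PairwiseDisjoint
        (fun k => ball (c k) r) := by
      intro j _ k _ hjk
      apply ball_disjoint_ball
      have hcc : dist (c j) (c k) = |(j : ℝ) - (k : ℝ)| * (ε * δ) := by
        rw [hc_def, dist_eq_norm]
        have he : (x₀ + (δ / 2 + (j : ℝ) * ε * δ) • y) -
            (x₀ + (δ / 2 + (k : ℝ) * ε * δ) • y) =
            (((j : ℝ) - (k : ℝ)) * (ε * δ)) • y := by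
          rw [show ((j : ℝ) - (k : ℝ)) * (ε * δ) =
            (δ / 2 + (j : ℝ) * ε * δ) - (δ / 2 + (k : ℝ) * ε * δ) by ring, sub_smul]
          abel
        rw [he, norm_smul, hy_eq, mul_one, Real.norm_eq_abs,
          abs_mul, abs_of_nonneg (by positivity : (0:ℝ) ≤ ε * δ)]
      have hjk1 : (1 : ℝ) ≤ |(j : ℝ) - (k : ℝ)| := by
        have h' : (j : ℤ) ≠ (k : ℤ) := by exact_mod_cast hjk
        have h2 := Int.one_le_abs (sub_ne_zero.2 h')
        have h3 : (1 : ℝ) ≤ |((j : ℤ) - (k : ℤ) : ℤ)| := by exact_mod_cast h2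
        push_cast at h3
        exact h3
      rw [hcc]
      have := mul_le_mul_of_nonneg_right hjk1 (by positivity : (0:ℝ) ≤ ε * δ)
      rw [hr_def]
      nlinarith
    have hvol : ∀ k : ℕ, volume (ball (c k) r)
        = ENNReal.ofReal (r ^ d) * volume (ball (0 : Euc d) 1) := by
      intro k
      rw [Measure.addHaar_ball_of_pos volume (c k) hr]
      simp [finrank_euclideanSpace_fin]
    have hlow : ∀ k ∈ Finset.range K,
        ENNReal.ofReal (lam * r ^ d) * volume (ball (0 : Euc d) 1)
          ≤ P (ball (c k) r) := by
      intro k hk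
      have hsubset := hsub k (Finset.mem_range.1 hk)
      have hpt : ∀ x, (ball (c k) r).indicator (fun _ => ENNReal.ofReal lam) x ≤
          (ball (c k) r).indicator (fun x => ENNReal.ofReal (p x)) x := by
        intro x
        by_cases hx : x ∈ ball (c k) r
        · simp only [indicator_of_mem hx]
          apply ENNReal.ofReal_le_ofReal
          have hx1 : x ∈ interior (msupport P) := hδsub (hsubset hx)
          have hx2 : x ∈ ball (0 : Euc d) R := by
            rw [mem_ball_zero_iff]
            have hxd : dist x x₀ < δ := mem_ball.1 (hsubset hx)
            have h5 : ‖x‖ - ‖x₀‖ ≤ ‖x - x₀‖ := norm_sub_norm_le x x₀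
            rw [dist_eq_norm] at hxd
            rw [hR_def]; linarith
          exact (hbound x ⟨hx1, hx2⟩).1
        · simp [indicator_of_notMem hx]
      calc ENNReal.ofReal (lam * r ^ d) * volume (ball (0 : Euc d) 1)
          = ENNReal.ofReal lam * volume (ball (c k) r) := by
            rw [hvol k, ENNReal.ofReal_mul hlam.le, mul_assoc]
        _ = ∫⁻ _ in ball (c k) r, ENNReal.ofReal lam := (setLIntegral_const _ _).symm
        _ = ∫⁻ x, (ball (c k) r).indicator (fun _ => ENNReal.ofReal lam) x := by
            rw [lintegral_indicator measurableSet_ball]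
        _ ≤ ∫⁻ x, (ball (c k) r).indicator (fun x => ENNReal.ofReal (p x)) x :=
            lintegral_mono hpt
        _ = ∫⁻ x in ball (c k) r, ENNReal.ofReal (p x) := by
            rw [lintegral_indicator measurableSet_ball]
        _ = P (ball (c k) r) := by
            rw [hA.2.1, withDensity_apply _ measurableSet_ball]
    have hCnn : (0 : ℝ) ≤ 2 ^ (d - 1) / aConst d := by positivity
    have hup : sphericalUniform d (closedBall y ε) ≤
        ENNReal.ofReal (2 ^ (d - 1) / aConst d * (2 * ε) ^ d) *
          volume (ball (0 : Euc d) 1) := by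
      rw [sphericalUniform, withDensity_apply _ measurableSet_closedBall]
      set f : Euc d → ℝ≥0∞ := fun x => ENNReal.ofReal
        ((ball (0 : Euc d) 1 \ {0}).indicator
          (fun x => 1 / (aConst d * ‖x‖ ^ (d - 1))) x) with hf_def
      have hpt : ∀ x, (closedBall y ε).indicator f x ≤
          (closedBall y ε).indicator (fun _ => ENNReal.ofReal (2 ^ (d - 1) / aConst d)) x := by
        intro x
        by_cases hx : x ∈ closedBall y ε
        · simp only [indicator_of_mem hx, hf_def]
          apply ENNReal.ofReal_le_ofReal
          by_cases hx0 : x ∈ ball (0 : Euc d) 1 \ {0}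
          · rw [indicator_of_mem hx0]
            have h2 : ‖y - x‖ ≤ ε := by
              rw [mem_closedBall, dist_eq_norm] at hx
              rw [norm_sub_rev]; exact hx
            have hxn : (1 : ℝ) / 2 ≤ ‖x‖ := by
              have h1 : ‖y‖ - ‖x‖ ≤ ‖y - x‖ := norm_sub_norm_le y x
              rw [hy_eq] at h1
              linarith
            have hxpos : (0 : ℝ) < ‖x‖ := by linarith
            have hpow : ((1 : ℝ) / 2) ^ (d - 1) ≤ ‖x‖ ^ (d - 1) :=
              pow_le_pow_left₀ (by norm_num) hxn _
            have hposx : 0 < aConst d * ‖x‖ ^ (d - 1) := by positivity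
            rw [div_le_div_iff₀ hposx ha]
            have h1 : (1 : ℝ) ≤ 2 ^ (d - 1) * ‖x‖ ^ (d - 1) := by
              calc (1 : ℝ) = (2 * (1 / 2)) ^ (d - 1) := by norm_num
                _ = 2 ^ (d - 1) * (1 / 2) ^ (d - 1) := mul_pow _ _ _
                _ ≤ 2 ^ (d - 1) * ‖x‖ ^ (d - 1) :=
                    mul_le_mul_of_nonneg_left hpow (by positivity)
            nlinarith
          · rw [indicator_of_notMem hx0]
            positivity
        · simp [indicator_of_notMem hx]
      calc ∫⁻ x in closedBall y ε, f x
          = ∫⁻ x, (closedBall y ε).indicator f x := by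
            rw [lintegral_indicator measurableSet_closedBall]
        _ ≤ ∫⁻ x, (closedBall y ε).indicator
              (fun _ => ENNReal.ofReal (2 ^ (d - 1) / aConst d)) x := lintegral_mono hpt
        _ = ∫⁻ _ in closedBall y ε, ENNReal.ofReal (2 ^ (d - 1) / aConst d) := by
            rw [lintegral_indicator measurableSet_closedBall]
        _ = ENNReal.ofReal (2 ^ (d - 1) / aConst d) * volume (closedBall y ε) :=
            setLIntegral_const _ _
        _ ≤ ENNReal.ofReal (2 ^ (d - 1) / aConst d) * volume (ball y (2 * ε)) := by
            exact mul_le_mul_right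
              (measure_mono (closedBall_subset_ball (by linarith))) _
        _ = ENNReal.ofReal (2 ^ (d - 1) / aConst d) *
              (ENNReal.ofReal ((2 * ε) ^ d) * volume (ball (0 : Euc d) 1)) := by
            rw [Measure.addHaar_ball_of_pos volume y (by positivity : (0:ℝ) < 2 * ε)]
            simp [finrank_euclideanSpace_fin]
        _ = ENNReal.ofReal (2 ^ (d - 1) / aConst d * (2 * ε) ^ d) *
              volume (ball (0 : Euc d) 1) := by
            rw [ENNReal.ofReal_mul hCnn, mul_assoc]
    have hGnull : P {x | T x ∉ subdiff φ x} = 0 := by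
      have hac : P ≪ (volume : Measure (Euc d)) := by
        rw [hA.2.1]; exact withDensity_absolutelyContinuous _ _
      exact hac (ae_iff.1 hTae)
    have hcover : (⋃ k ∈ Finset.range K, ball (c k) r) ⊆
        T ⁻¹' (closedBall y ε) ∪ {x | T x ∉ subdiff φ x} := by
      intro x hx
      simp only [mem_iUnion, Finset.mem_range, exists_prop] at hx
      obtain ⟨k, hk, hxk⟩ := hx
      by_cases hG : T x ∈ subdiff φ x
      · left
        have hz1 : ‖T x‖ ≤ 1 := by
          have := hball (mem_iUnion.2 ⟨x, hG⟩)
          simpa [mem_closedBall, dist_zero_right] using this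
        have hxc : ‖x - c k‖ < r := by
          rw [← dist_eq_norm]; exact mem_ball.1 hxk
        have hre : x - x₀ - (δ / 2 + (k : ℝ) * ε * δ) • y = x - c k := by
          rw [hc_def, sub_sub]
        have hvv : ‖x - x₀ - (δ / 2 + (k : ℝ) * ε * δ) • y‖ ≤
            ε / 2 * (δ / 2 + (k : ℝ) * ε * δ) := by
          rw [hre]
          have hrs : r ≤ ε / 2 * (δ / 2 + (k : ℝ) * ε * δ) := by
            rw [hr_def]
            have : (0:ℝ) ≤ (k : ℝ) * ε * δ := by positivity
            nlinarith
          linarith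
        have hnear := near_pointwise hy hG hy_eq hz1 hε (hs_pos k) hvv
        rw [mem_preimage, mem_closedBall, dist_eq_norm]
        exact hnear
      · right; exact hG
    set ν := volume (ball (0 : Euc d) 1) with hν_def
    have hchain : (K : ℝ≥0∞) * (ENNReal.ofReal (lam * r ^ d) * ν) ≤
        ENNReal.ofReal (2 ^ (d - 1) / aConst d * (2 * ε) ^ d) * ν := by
      calc (K : ℝ≥0∞) * (ENNReal.ofReal (lam * r ^ d) * ν)
          = ∑ _k ∈ Finset.range K, ENNReal.ofReal (lam * r ^ d) * ν := by
            rw [Finset.sum_const, Finset.card_range, nsmul_eq_mul]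
        _ ≤ ∑ k ∈ Finset.range K, P (ball (c k) r) := Finset.sum_le_sum hlow
        _ = P (⋃ k ∈ Finset.range K, ball (c k) r) :=
            (measure_biUnion_finset hdisj (fun k _ => measurableSet_ball)).symm
        _ ≤ P (T ⁻¹' (closedBall y ε) ∪ {x | T x ∉ subdiff φ x}) := measure_mono hcover
        _ ≤ P (T ⁻¹' (closedBall y ε)) + P {x | T x ∉ subdiff φ x} := measure_union_le _ _
        _ = P (T ⁻¹' (closedBall y ε)) := by rw [hGnull, add_zero]
        _ = (P.map T) (closedBall y ε) :=
            (Measure.map_apply hTm measurableSet_closedBall).symm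
        _ = sphericalUniform d (closedBall y ε) := by rw [hTmap]
        _ ≤ _ := hup
    have hν0 : ν ≠ 0 := (measure_ball_pos _ _ one_pos).ne'
    have hνt : ν ≠ ⊤ := measure_ball_lt_top.ne
    have hchain2 : ENNReal.ofReal ((K : ℝ) * (lam * r ^ d)) ≤
        ENNReal.ofReal (2 ^ (d - 1) / aConst d * (2 * ε) ^ d) := by
      rw [ENNReal.ofReal_mul (Nat.cast_nonneg K), ENNReal.ofReal_natCast]
      refine (ENNReal.mul_le_mul_iff_left hν0 hνt).1 ?_
      rw [mul_assoc]
      exact hchain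
    have hreal : (K : ℝ) * (lam * r ^ d) ≤ 2 ^ (d - 1) / aConst d * (2 * ε) ^ d :=
      (ENNReal.ofReal_le_ofReal_iff (by positivity)).1 hchain2
    have hεd : ε ^ d = ε ^ (d - 1) * ε := by
      rw [← pow_succ, Nat.sub_add_cancel hd]
    have hrd : r ^ d = ε ^ d * (δ / 8) ^ d := by
      rw [hr_def, show ε * δ / 8 = ε * (δ / 8) by ring, mul_pow]
    have h2εd : (2 * ε) ^ d = 2 ^ d * ε ^ d := mul_pow 2 ε d
    have hL : 1 / (8 * ε) * (lam * r ^ d) ≤ (K : ℝ) * (lam * r ^ d) :=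
      mul_le_mul_of_nonneg_right hK3 (by positivity)
    have hLeq : 1 / (8 * ε) * (lam * r ^ d) = lam * (δ / 8) ^ d / 8 * ε ^ (d - 1) := by
      rw [hrd, hεd]
      field_simp
    have hReq : 2 ^ (d - 1) / aConst d * (2 * ε) ^ d =
        (2 ^ (d - 1) / aConst d * 2 ^ d) * ε * ε ^ (d - 1) := by
      rw [h2εd, hεd]; ring
    have hfin : lam * (δ / 8) ^ d / 8 * ε ^ (d - 1) ≤
        (2 ^ (d - 1) / aConst d * 2 ^ d) * ε * ε ^ (d - 1) := by
      rw [← hLeq, ← hReq]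
      exact hL.trans hreal
    exact le_of_mul_le_mul_right hfin (pow_pos hε _)
  -- conclude by choosing ε small
  set A : ℝ := lam * (δ / 8) ^ d / 8 with hA_def
  set B : ℝ := 2 ^ (d - 1) / aConst d * 2 ^ d with hB_def
  have hA0 : 0 < A := by
    rw [hA_def]
    have : (0:ℝ) < (δ / 8) ^ d := pow_pos (by linarith) d
    positivity
  have hB0 : 0 < B := by
    rw [hB_def]
    positivity
  set ε₀ : ℝ := min (1 / 8) (A / (2 * B)) with hε₀_def
  have hε₀ : 0 < ε₀ := lt_min (by norm_num) (div_pos hA0 (by linarith))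
  have h1 := key ε₀ hε₀ (min_le_left _ _)
  have h2 : B * ε₀ ≤ A / 2 := by
    have hm := min_le_right (1 / 8) (A / (2 * B))
    calc B * ε₀ ≤ B * (A / (2 * B)) := mul_le_mul_of_nonneg_left hm hB0.le
      _ = A / 2 := by field_simp
  linarith
end
end
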